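/- For every n ≥ 2, the connected subgraph arrangement 𝒜_{Δ_{n,1}} of the path-with-triangle graph Δ_{n,1} is factored; in fact, the partition with blocks π_1 = {H_{{1,n+1}}}, π_2 = {H_{{n+1}}, H_{{1}}, H_{{1,2}}, …, H_{{1,2,…,n}}}, and π_i = {H_X ∈ 𝒜_{Δ_{n,1}} : X ∩ {i,…,n} = ∅} ∖ (π_1 ∪ ⋯ ∪ π_{i−1}) for 3 ≤ i ≤ n+1, is a nice partition of 𝒜_{Δ_{n,1}}. -/

import Mathlib

open Finset

/-- The linear form `∑_{i ∈ I} x_i` on `ℚ^n`. -/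
noncomputable def linForm {n : ℕ} (I : Finset (Fin n)) : (Fin n → ℚ) →ₗ[ℚ] ℚ :=
  ∑ i ∈ I, LinearMap.proj i

/-- `I` is a nonempty subset of vertices inducing a connected subgraph of `G`. -/
def ConnSet {n : ℕ} (G : SimpleGraph (Fin n)) (I : Finset (Fin n)) : Prop :=
  I.Nonempty ∧ (G.induce (↑I : Set (Fin n))).Connected

/-- The connected subgraph arrangement of `G`, as a set of hyperplanes of `ℚ^n`. -/
def csa {n : ℕ} (G : SimpleGraph (Fin n)) : Set (Submodule ℚ (Fin n → ℚ)) :=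
  {H | ∃ I : Finset (Fin n), ConnSet G I ∧ H = LinearMap.ker (linForm I)}

/-- The almost path graph `A_{n,k}` (paper notation, vertices `1,…,n+1` realized as
`Fin (n+1)` with `0,…,n`): a path `1–⋯–n` together with the edge `{k, n+1}`. -/
def almostPath (n k : ℕ) : SimpleGraph (Fin (n + 1)) :=
  SimpleGraph.fromRel (fun a b =>
    (a.val + 1 = b.val ∧ b.val < n) ∨ (a.val = k - 1 ∧ b.val = n))

/-- The path-with-triangle graph `Δ_{n,k}` (paper notation): a path `1–⋯–n` together
with the edges `{k, n+1}` and `{k+1, n+1}`. -/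
def pathTriangle (n k : ℕ) : SimpleGraph (Fin (n + 1)) :=
  SimpleGraph.fromRel (fun a b =>
    (a.val + 1 = b.val ∧ b.val < n) ∨ (a.val = k - 1 ∧ b.val = n) ∨ (a.val = k ∧ b.val = n))

/-- The module of `𝒜_G`-derivations `D(𝒜_G) ⊆ Der_ℚ(ℚ[x_1,…,x_n])`. -/
noncomputable def derModule {n : ℕ} (G : SimpleGraph (Fin n)) :
    Submodule (MvPolynomial (Fin n) ℚ)
      (Derivation ℚ (MvPolynomial (Fin n) ℚ) (MvPolynomial (Fin n) ℚ)) where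
  carrier := {θ | ∀ I : Finset (Fin n), ConnSet G I →
    (∑ i ∈ I, MvPolynomial.X i) ∣ θ (∑ i ∈ I, MvPolynomial.X i)}
  add_mem' := by
    intro a b ha hb I hI
    rw [Derivation.add_apply]
    exact dvd_add (ha I hI) (hb I hI)
  zero_mem' := by
    intro I hI
    simp
  smul_mem' := by
    intro c θ hθ I hI
    rw [Derivation.smul_apply, smul_eq_mul]
    exact (hθ I hI).mul_left c

open Classical in
/-- The defining linear forms of the connected subgraph arrangement of `G`
(each hyperplane `H_I ∈ 𝒜_G` corresponds to its defining form `∑_{i∈I} x_i`;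
this correspondence is bijective for 0/1-arrangements). -/
noncomputable def csaForms {n : ℕ} (G : SimpleGraph (Fin n)) :
    Finset ((Fin n → ℚ) →ₗ[ℚ] ℚ) :=
  (Finset.univ.filter fun I : Finset (Fin n) => ConnSet G I).image linForm

/-- Membership in the intersection lattice `L(𝒜)` of the arrangement with defining
forms `F`: the intersections `⋂_{f ∈ B} ker f` over subsets `B ⊆ F` (with the ambient
space as the empty intersection). -/
def InLattice {n : ℕ} (F : Finset ((Fin n → ℚ) →ₗ[ℚ] ℚ))
    (X : Submodule ℚ (Fin n → ℚ)) : Prop :=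
  ∃ B ⊆ F, X = ⨅ f ∈ B, LinearMap.ker f

/-- `π` is a nice partition (a factorization) of the arrangement with (pairwise
distinct) defining forms `F`: it is a partition of `F` into `s` nonempty blocks which
is independent (any choice of one form from each block is linearly independent), and
for every `X ∈ L(𝒜) ∖ {ambient space}` the induced partition of the localization
`𝒜_X = {f ∈ F : X ⊆ ker f}` admits a singleton block. -/
def IsNicePartition {n s : ℕ} (F : Finset ((Fin n → ℚ) →ₗ[ℚ] ℚ))
    (π : Fin s → Finset ((Fin n → ℚ) →ₗ[ℚ] ℚ)) : Prop :=
  (∀ i, (π i).Nonempty) ∧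
  (∀ i, π i ⊆ F) ∧
  (∀ f ∈ F, ∃! i, f ∈ π i) ∧
  (∀ g : Fin s → ((Fin n → ℚ) →ₗ[ℚ] ℚ), (∀ i, g i ∈ π i) → LinearIndependent ℚ g) ∧
  (∀ X : Submodule ℚ (Fin n → ℚ), InLattice F X → X ≠ ⊤ →
    ∃ i, ∃ f ∈ π i, X ≤ LinearMap.ker f ∧
      ∀ g ∈ π i, X ≤ LinearMap.ker g → g = f)

/-- An arrangement (given by its defining forms `F`) is factored if it admits a nice
partition. -/
def IsFactored {n : ℕ} (F : Finset ((Fin n → ℚ) →ₗ[ℚ] ℚ)) : Prop :=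
  ∃ (s : ℕ) (π : Fin s → Finset ((Fin n → ℚ) →ₗ[ℚ] ℚ)), IsNicePartition F π

/-- The vertex set `{1,…,m}` of the paper (0-based: `{0,…,m−1}`) inside `Fin (n+1)`. -/
def initSeg (n m : ℕ) : Finset (Fin (n + 1)) :=
  Finset.univ.filter fun v => v.val < m

open Classical in
/-- The forms of the hyperplanes `H_X ∈ 𝒜_{Δ_{n,1}}` with `X ∩ {i,…,n} = ∅` (paper
1-based indexing: a vertex `v ∈ [n+1]` of the paper is `v − 1` in `Fin (n+1)`). -/
noncomputable def condSet (n i : ℕ) : Finset ((Fin (n + 1) → ℚ) →ₗ[ℚ] ℚ) :=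
  ((Finset.univ.filter fun X : Finset (Fin (n + 1)) => ConnSet (pathTriangle n 1) X).filter
    fun X => ∀ v ∈ X, v.val + 1 < i ∨ v.val = n).image linForm

open Classical in
/-- The blocks `π_1, …, π_{n+1}` (paper indexing; `blockP n 0 = ∅` is junk) of the
partition of `𝒜_{Δ_{n,1}}` from the paper:
`π₁ = {H_{{1,n+1}}}`, `π₂ = {H_{{n+1}}, H_{{1}}, H_{{1,2}}, …, H_{{1,…,n}}}`, and
`π_i = {H_X : X ∩ {i,…,n} = ∅} ∖ (π₁ ∪ ⋯ ∪ π_{i−1})` for `3 ≤ i ≤ n+1`. -/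
noncomputable def blockP (n : ℕ) : ℕ → Finset ((Fin (n + 1) → ℚ) →ₗ[ℚ] ℚ)
  | 0 => ∅
  | 1 => {linForm {0, Fin.last n}}
  | 2 => insert (linForm ({Fin.last n} : Finset (Fin (n + 1))))
      ((Finset.range n).image fun m => linForm (initSeg n (m + 1)))
  | (i + 3) => condSet n (i + 3) \
      ((Finset.range (i + 3)).attach.biUnion fun j => blockP n j.val)
  decreasing_by exact Finset.mem_range.mp j.2

section Basics
variable {n : ℕ}

lemma linForm_apply (I : Finset (Fin n)) (x : Fin n → ℚ) :
    linForm I x = ∑ i ∈ I, x i := by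
  simp [linForm]

lemma linForm_single (I : Finset (Fin n)) (j : Fin n) :
    linForm I (Pi.single j 1) = if j ∈ I then 1 else 0 := by
  rw [linForm_apply]
  rw [show (∑ i ∈ I, Pi.single j (1:ℚ) i) = ∑ i ∈ I, if i = j then 1 else 0 by
    apply Finset.sum_congr rfl; intro i _; rw [Pi.single_apply]]
  rw [Finset.sum_ite_eq' I j (fun _ => (1:ℚ))]

lemma linForm_inj {I J : Finset (Fin n)} (h : linForm I = linForm J) : I = J := by
  ext j
  have := congrArg (fun f : (Fin n → ℚ) →ₗ[ℚ] ℚ => f (Pi.single j 1)) h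
  simp only [linForm_single] at this
  by_cases hI : j ∈ I <;> by_cases hJ : j ∈ J <;> simp_all

lemma linForm_union {A B : Finset (Fin n)} (h : Disjoint A B) :
    linForm (A ∪ B) = linForm A + linForm B := by
  unfold linForm
  rw [Finset.sum_union h]

lemma linForm_insert {a : Fin n} {s : Finset (Fin n)} (h : a ∉ s) :
    linForm (insert a s) = linForm {a} + linForm s := by
  unfold linForm
  rw [Finset.sum_insert h, Finset.sum_singleton]

end Basics

section Sets
variable {n : ℕ}

/-- The interval of path vertices with values in `[p, q)`. -/
def iv (n p q : ℕ) : Finset (Fin (n+1)) := Finset.univ.filter fun v => p ≤ v.val ∧ v.val < q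

def bset (n q : ℕ) : Finset (Fin (n+1)) := insert (Fin.last n) (iv n 0 q)

def cset (n q : ℕ) : Finset (Fin (n+1)) := insert (Fin.last n) (iv n 1 q)

lemma mem_iv {p q : ℕ} {v : Fin (n+1)} : v ∈ iv n p q ↔ p ≤ v.val ∧ v.val < q := by
  simp [iv]

lemma last_not_mem_iv {p q : ℕ} (hq : q ≤ n) : Fin.last n ∉ iv n p q := by
  simp [mem_iv, Fin.last]; omega

lemma mem_bset {q : ℕ} {v : Fin (n+1)} : v ∈ bset n q ↔ v = Fin.last n ∨ (v.val < q) := by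
  simp [bset, mem_iv]

lemma mem_cset {q : ℕ} {v : Fin (n+1)} : v ∈ cset n q ↔ v = Fin.last n ∨ (1 ≤ v.val ∧ v.val < q) := by
  simp [cset, mem_iv]

lemma iv_nonempty {p q : ℕ} (h : p < q) (hq : q ≤ n) : (iv n p q).Nonempty :=
  ⟨⟨p, by omega⟩, by simp [mem_iv]; omega⟩

lemma iv_union {p q r : ℕ} (h1 : p ≤ q) (h2 : q ≤ r) :
    iv n p q ∪ iv n q r = iv n p r := by
  ext v; simp [mem_iv]; omega

lemma iv_disj {p q r : ℕ} : Disjoint (iv n p q) (iv n q r) := by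
  rw [Finset.disjoint_left]; intro v h1 h2
  rw [mem_iv] at h1 h2; omega

lemma linForm_iv_add {p q r : ℕ} (h1 : p ≤ q) (h2 : q ≤ r) :
    linForm (iv n p q) + linForm (iv n q r) = linForm (iv n p r) := by
  rw [← iv_union h1 h2, linForm_union iv_disj]

lemma bset_zero : bset n 0 = {Fin.last n} := by
  ext v; simp [mem_bset]

lemma linForm_bset {q : ℕ} (hq : q ≤ n) :
    linForm (bset n q) = linForm (bset n 0) + linForm (iv n 0 q) := by
  rw [bset_zero]
  unfold bset
  rw [linForm_insert (last_not_mem_iv hq)]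

lemma linForm_cset {q : ℕ} (hq : q ≤ n) :
    linForm (cset n q) = linForm (bset n 0) + linForm (iv n 1 q) := by
  rw [bset_zero]
  unfold cset
  rw [linForm_insert (last_not_mem_iv hq)]

end Sets
section SetInj
variable {n : ℕ}

lemma iv_inj {p q p' q' : ℕ} (h : p < q) (hq : q ≤ n) (h' : p' < q') (hq' : q' ≤ n)
    (e : iv n p q = iv n p' q') : p = p' ∧ q = q' := by
  have h1 : (⟨p, by omega⟩ : Fin (n+1)) ∈ iv n p' q' := by
    rw [← e]; simp [mem_iv]; omega
  have h2 : (⟨p', by omega⟩ : Fin (n+1)) ∈ iv n p q := by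
    rw [e]; simp [mem_iv]; omega
  have h3 : (⟨q-1, by omega⟩ : Fin (n+1)) ∈ iv n p' q' := by
    rw [← e]; simp [mem_iv]; omega
  have h4 : (⟨q'-1, by omega⟩ : Fin (n+1)) ∈ iv n p q := by
    rw [e]; simp [mem_iv]; omega
  rw [mem_iv] at h1 h2 h3 h4
  simp only at h1 h2 h3 h4
  omega

lemma last_mem_bset {q : ℕ} : Fin.last n ∈ bset n q := by simp [mem_bset]
lemma last_mem_cset {q : ℕ} : Fin.last n ∈ cset n q := by simp [mem_cset]

lemma bset_ne_iv {q p' q' : ℕ} (hq' : q' ≤ n) : bset n q ≠ iv n p' q' := by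
  intro e
  exact last_not_mem_iv hq' (e ▸ last_mem_bset)

lemma cset_ne_iv {q p' q' : ℕ} (hq' : q' ≤ n) : cset n q ≠ iv n p' q' := by
  intro e
  exact last_not_mem_iv hq' (e ▸ last_mem_cset)

lemma bset_inj {q q' : ℕ} (hq : q ≤ n) (hq' : q' ≤ n) (e : bset n q = bset n q') :
    q = q' := by
  by_contra hne
  rcases Nat.lt_or_ge q q' with h | h
  · have : (⟨q, by omega⟩ : Fin (n+1)) ∈ bset n q := by
      rw [e]; rw [mem_bset]; right; simpa using h
    rw [mem_bset] at this
    rcases this with h1 | h1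
    · have := congrArg Fin.val h1; simp [Fin.last] at this; omega
    · simp at h1
  · have h' : q' < q := by omega
    have : (⟨q', by omega⟩ : Fin (n+1)) ∈ bset n q' := by
      rw [← e]; rw [mem_bset]; right; simpa using h'
    rw [mem_bset] at this
    rcases this with h1 | h1
    · have := congrArg Fin.val h1; simp [Fin.last] at this; omega
    · simp at h1

lemma cset_inj {q q' : ℕ} (hq : q ≤ n) (hq' : q' ≤ n) (h2 : 2 ≤ q) (h2' : 2 ≤ q')
    (e : cset n q = cset n q') : q = q' := by
  by_contra hne
  rcases Nat.lt_or_ge q q' with h | h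
  · have : (⟨q, by omega⟩ : Fin (n+1)) ∈ cset n q := by
      rw [e]; rw [mem_cset]; right; simp; omega
    rw [mem_cset] at this
    rcases this with h1 | h1
    · have := congrArg Fin.val h1; simp [Fin.last] at this; omega
    · simp at h1
  · have h' : q' < q := by omega
    have : (⟨q', by omega⟩ : Fin (n+1)) ∈ cset n q' := by
      rw [← e]; rw [mem_cset]; right; simp; omega
    rw [mem_cset] at this
    rcases this with h1 | h1
    · have := congrArg Fin.val h1; simp [Fin.last] at this; omega
    · simp at h1

lemma zero_mem_bset {q : ℕ} (hq : 1 ≤ q) (hn : 1 ≤ n) : (⟨0, by omega⟩ : Fin (n+1)) ∈ bset n q := by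
  rw [mem_bset]; right; simp; omega

lemma bset_ne_cset {q q' : ℕ} (hq : 1 ≤ q) (hn : 1 ≤ n) : bset n q ≠ cset n q' := by
  intro e
  have := e ▸ zero_mem_bset hq hn
  rw [mem_cset] at this
  rcases this with h1 | h1
  · have := congrArg Fin.val h1; simp [Fin.last] at this; omega
  · simp at h1

lemma bset_zero_ne_cset {q' : ℕ} (h2 : 2 ≤ q') (hq' : q' ≤ n) : bset n 0 ≠ cset n q' := by
  intro e
  have : (⟨1, by omega⟩ : Fin (n+1)) ∈ cset n q' := by
    rw [mem_cset]; right; simp; omega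
  rw [← e, mem_bset] at this
  rcases this with h1 | h1
  · have := congrArg Fin.val h1; simp [Fin.last] at this; omega
  · simp at h1

end SetInj
section Graph
variable {n : ℕ}

lemma pt_adj_iff {a b : Fin (n+1)} : (pathTriangle n 1).Adj a b ↔ a ≠ b ∧
    ((a.val + 1 = b.val ∧ b.val < n) ∨ (a.val = 0 ∧ b.val = n) ∨ (a.val = 1 ∧ b.val = n) ∨
     (b.val + 1 = a.val ∧ a.val < n) ∨ (b.val = 0 ∧ a.val = n) ∨ (b.val = 1 ∧ a.val = n)) := by
  rw [pathTriangle, SimpleGraph.fromRel_adj]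
  constructor
  · rintro ⟨hne, h | h⟩ <;> exact ⟨hne, by tauto⟩
  · rintro ⟨hne, h⟩
    exact ⟨hne, by tauto⟩

lemma induce_adj_of {I : Finset (Fin (n+1))} {u v : (↑I : Set (Fin (n+1)))}
    (h : (pathTriangle n 1).Adj ↑u ↑v) : ((pathTriangle n 1).induce ↑I).Adj u v := h

lemma reach_invariant {V : Type*} {G : SimpleGraph V} (P : V → Prop)
    (hP : ∀ a b, G.Adj a b → P a → P b) {u v : V} (h : G.Reachable u v) (hu : P u) : P v := by
  obtain ⟨w⟩ := h
  induction w with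
  | nil => exact hu
  | cons h p ih => exact ih (hP _ _ h hu)

/-- Reachability along a chain of path vertices inside `I`. -/
lemma reach_chain {I : Finset (Fin (n+1))} {p q : ℕ} (hpq : p < q) (hq : q ≤ n)
    (hsub : iv n p q ⊆ I) :
    ∀ m (h1 : p ≤ m) (h2 : m < q),
      ((pathTriangle n 1).induce ↑I).Reachable
        ⟨⟨p, by omega⟩, by
          exact_mod_cast hsub (by rw [mem_iv]; constructor <;> simp <;> omega)⟩
        ⟨⟨m, by omega⟩, by
          exact_mod_cast hsub (by rw [mem_iv]; constructor <;> simp <;> omega)⟩ := by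
  intro m
  induction m with
  | zero =>
    intro h1 h2
    have hp : p = 0 := by omega
    subst hp
    rfl
  | succ m ih =>
    intro h1 h2
    by_cases hm : p = m + 1
    · subst hm; rfl
    · have h1' : p ≤ m := by omega
      have h2' : m < q := by omega
      refine (ih h1' h2').trans (SimpleGraph.Adj.reachable ?_)
      apply induce_adj_of
      rw [pt_adj_iff]
      constructor
      · intro e
        have := congrArg Fin.val e
        simp at this
      · left; simp; omega

lemma connected_of_root {V : Type*} (G : SimpleGraph V) (r : V)
    (h : ∀ v, G.Reachable r v) : G.Connected := by
  rw [SimpleGraph.connected_iff]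
  exact ⟨fun u v => (h u).symm.trans (h v), ⟨r⟩⟩

instance : Nonempty (Fin (n+1)) := ⟨0⟩

lemma good_connected_iv {p q : ℕ} (hpq : p < q) (hq : q ≤ n) :
    ConnSet (pathTriangle n 1) (iv n p q) := by
  refine ⟨iv_nonempty hpq hq, ?_⟩
  have hmem : (⟨p, by omega⟩ : Fin (n+1)) ∈ iv n p q := by rw [mem_iv]; simp; omega
  apply connected_of_root _ ⟨⟨p, by omega⟩, by exact_mod_cast hmem⟩
  rintro ⟨v, hv⟩
  have hv' : v ∈ iv n p q := by exact_mod_cast hv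
  rw [mem_iv] at hv'
  have h := reach_chain hpq hq (le_refl _) v.val hv'.1 hv'.2
  have e : (⟨v, hv⟩ : ↑(↑(iv n p q) : Set (Fin (n+1)))) = ⟨⟨v.val, by omega⟩, by
      exact_mod_cast hv⟩ := by
    apply Subtype.ext; apply Fin.ext; rfl
  rw [e]
  exact h

end Graph
section Conn
variable {n : ℕ}

lemma good_connected_bset {q : ℕ} (hq : q ≤ n) : ConnSet (pathTriangle n 1) (bset n q) := by
  refine ⟨⟨Fin.last n, last_mem_bset⟩, ?_⟩
  apply connected_of_root _ ⟨Fin.last n, by exact_mod_cast (last_mem_bset (q := q))⟩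
  rintro ⟨v, hv⟩
  have hv' : v ∈ bset n q := by exact_mod_cast hv
  rw [mem_bset] at hv'
  rcases hv' with rfl | hvq
  · rfl
  · have hq1 : 1 ≤ q := by omega
    have hsub : iv n 0 q ⊆ bset n q := by
      intro w hw; rw [mem_bset]; rw [mem_iv] at hw; right; exact hw.2
    have hmem0 : (⟨0, by omega⟩ : Fin (n+1)) ∈ bset n q := by
      rw [mem_bset]; right; simp; omega
    have step : ((pathTriangle n 1).induce ↑(bset n q)).Adj
        ⟨Fin.last n, by exact_mod_cast (last_mem_bset (q := q))⟩
        ⟨⟨0, by omega⟩, by exact_mod_cast hmem0⟩ := by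
      apply induce_adj_of
      rw [pt_adj_iff]
      refine ⟨?_, ?_⟩
      · intro e; have := congrArg Fin.val e; simp [Fin.last] at this; omega
      · simp [Fin.last]
    refine (step.reachable).trans ?_
    have h := reach_chain (p := 0) (q := q) (by omega) hq hsub v.val (by omega) hvq
    have e : (⟨v, hv⟩ : ↑(↑(bset n q) : Set (Fin (n+1)))) = ⟨⟨v.val, by omega⟩, by
        exact_mod_cast hsub (by rw [mem_iv]; simp; omega)⟩ := by
      apply Subtype.ext; apply Fin.ext; rfl
    rw [e]
    exact h

lemma good_connected_cset {q : ℕ} (h2 : 2 ≤ q) (hq : q ≤ n) :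
    ConnSet (pathTriangle n 1) (cset n q) := by
  refine ⟨⟨Fin.last n, last_mem_cset⟩, ?_⟩
  apply connected_of_root _ ⟨Fin.last n, by exact_mod_cast (last_mem_cset (q := q))⟩
  rintro ⟨v, hv⟩
  have hv' : v ∈ cset n q := by exact_mod_cast hv
  rw [mem_cset] at hv'
  rcases hv' with rfl | hvq
  · rfl
  · have hsub : iv n 1 q ⊆ cset n q := by
      intro w hw; rw [mem_cset]; rw [mem_iv] at hw; right; exact hw
    have hmem1 : (⟨1, by omega⟩ : Fin (n+1)) ∈ cset n q := by
      rw [mem_cset]; right; simp; omega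
    have step : ((pathTriangle n 1).induce ↑(cset n q)).Adj
        ⟨Fin.last n, by exact_mod_cast (last_mem_cset (q := q))⟩
        ⟨⟨1, by omega⟩, by exact_mod_cast hmem1⟩ := by
      apply induce_adj_of
      rw [pt_adj_iff]
      refine ⟨?_, ?_⟩
      · intro e; have := congrArg Fin.val e; simp [Fin.last] at this; omega
      · simp [Fin.last]
    refine (step.reachable).trans ?_
    have h := reach_chain (p := 1) (q := q) (by omega) hq hsub v.val (by omega) hvq.2
    have e : (⟨v, hv⟩ : ↑(↑(cset n q) : Set (Fin (n+1)))) = ⟨⟨v.val, by omega⟩, by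
        exact_mod_cast hsub (by rw [mem_iv]; simp; omega)⟩ := by
      apply Subtype.ext; apply Fin.ext; rfl
    rw [e]
    exact h

/-- If `I` is connected and has vertices on both sides of a gap `w < n`, then `w ∈ I`. -/
lemma conn_gap {I : Finset (Fin (n+1))} (hc : ConnSet (pathTriangle n 1) I)
    {a b : Fin (n+1)} (ha : a ∈ I) (hb : b ∈ I) (w : ℕ) (hw1 : a.val < w) (hw2 : w ≤ b.val)
    (hbn : b.val < n) : (⟨w, by omega⟩ : Fin (n+1)) ∈ I := by
  by_contra hwI
  have hreach := hc.2.preconnected ⟨b, by exact_mod_cast hb⟩ ⟨a, by exact_mod_cast ha⟩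
  have hP : w ≤ a.val ∧ a.val < n := by
    refine reach_invariant (G := (pathTriangle n 1).induce ↑I)
      (fun v => w ≤ (v : Fin (n+1)).val ∧ (v : Fin (n+1)).val < n) ?_ hreach ⟨hw2, hbn⟩
    rintro ⟨u, hu⟩ ⟨v, hv⟩ hadj ⟨h1, h2⟩
    have hadj' : (pathTriangle n 1).Adj u v := hadj
    rw [pt_adj_iff] at hadj'
    obtain ⟨hne, hcase⟩ := hadj'
    have huI : u ∈ I := by exact_mod_cast hu
    have hne' : u.val ≠ w := by
      intro e
      apply hwI
      have : u = (⟨w, by omega⟩ : Fin (n+1)) := Fin.ext e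
      rwa [← this]
    have h1' : w ≤ u.val := h1
    have h2' : u.val < n := h2
    show w ≤ v.val ∧ v.val < n
    omega
  omega

/-- If `last ∈ I` and `I` has another vertex, then `0 ∈ I` or `1 ∈ I`. -/
lemma conn_attach {I : Finset (Fin (n+1))} (hc : ConnSet (pathTriangle n 1) I)
    (hlast : Fin.last n ∈ I) {u : Fin (n+1)} (hu : u ∈ I) (hun : u.val < n) :
    (⟨0, by omega⟩ : Fin (n+1)) ∈ I ∨ (⟨1, by omega⟩ : Fin (n+1)) ∈ I := by
  by_contra hcon
  push_neg at hcon
  have hreach := hc.2.preconnected ⟨u, by exact_mod_cast hu⟩ ⟨Fin.last n, by exact_mod_cast hlast⟩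
  have hP : (Fin.last n).val < n := by
    refine reach_invariant (G := (pathTriangle n 1).induce ↑I)
      (fun v => (v : Fin (n+1)).val < n) ?_ hreach hun
    rintro ⟨x, hx⟩ ⟨y, hy⟩ hadj h1
    have hadj' : (pathTriangle n 1).Adj x y := hadj
    rw [pt_adj_iff] at hadj'
    obtain ⟨hne, hcase⟩ := hadj'
    have hxI : x ∈ I := by exact_mod_cast hx
    have hx0 : x.val ≠ 0 := by
      intro e
      exact hcon.1 (by rwa [show (⟨0, by omega⟩ : Fin (n+1)) = x from (Fin.ext e.symm)])
    have hx1 : x.val ≠ 1 := by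
      intro e
      exact hcon.2 (by rwa [show (⟨1, by omega⟩ : Fin (n+1)) = x from (Fin.ext e.symm)])
    have h1' : x.val < n := h1
    show y.val < n
    omega
  simp [Fin.last] at hP

end Conn
section Charac
variable {n : ℕ}

/-- The shapes of connected sets in `Δ_{n,1}`. -/
def Good (n : ℕ) (I : Finset (Fin (n+1))) : Prop :=
  (∃ p q, p < q ∧ q ≤ n ∧ I = iv n p q) ∨ (∃ q, q ≤ n ∧ I = bset n q) ∨
  (∃ q, 2 ≤ q ∧ q ≤ n ∧ I = cset n q)

lemma good_conn {I : Finset (Fin (n+1))} (h : Good n I) : ConnSet (pathTriangle n 1) I := by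
  rcases h with ⟨p, q, h1, h2, rfl⟩ | ⟨q, h1, rfl⟩ | ⟨q, h1, h2, rfl⟩
  · exact good_connected_iv h1 h2
  · exact good_connected_bset h1
  · exact good_connected_cset h1 h2

lemma conn_good {I : Finset (Fin (n+1))} (hn : 2 ≤ n) (hc : ConnSet (pathTriangle n 1) I) : Good n I := by
  classical
  set J : Finset (Fin (n+1)) := I.erase (Fin.last n) with hJ
  by_cases hJe : J = ∅
  · -- I = {last} = bset n 0
    right; left
    refine ⟨0, by omega, ?_⟩
    rw [bset_zero]
    obtain ⟨v, hv⟩ := hc.1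
    have hvl : v = Fin.last n := by
      by_contra hne
      have : v ∈ J := Finset.mem_erase.mpr ⟨hne, hv⟩
      simp [hJe] at this
    ext w
    simp only [Finset.mem_singleton]
    constructor
    · intro hw
      by_contra hne
      have : w ∈ J := Finset.mem_erase.mpr ⟨hne, hw⟩
      simp [hJe] at this
    · rintro rfl; exact hvl ▸ hv
  · obtain ⟨u0, hu0⟩ := Finset.nonempty_of_ne_empty hJe
    have hvals : ∀ v ∈ J, v.val < n := by
      intro v hv
      obtain ⟨hne, _⟩ := Finset.mem_erase.mp hv
      have := v.isLt
      rcases Nat.lt_or_ge v.val n with h | h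
      · exact h
      · exact absurd (Fin.ext (by omega : v.val = n)) hne
    -- min and max values of J
    set vals := J.image Fin.val with hvals'
    have hvne : vals.Nonempty := ⟨u0.val, Finset.mem_image_of_mem _ hu0⟩
    set p := vals.min' hvne with hp
    set m := vals.max' hvne with hm
    obtain ⟨a, haJ, hpa⟩ := Finset.mem_image.mp (vals.min'_mem hvne)
    obtain ⟨b, hbJ, hmb⟩ := Finset.mem_image.mp (vals.max'_mem hvne)
    have hpm : p ≤ m := le_trans (Finset.min'_le _ _ (Finset.mem_image_of_mem _ hu0))
      (Finset.le_max' _ _ (Finset.mem_image_of_mem _ hu0))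
    have hmn : m < n := by have := hvals b hbJ; omega
    have haI : a ∈ I := (Finset.mem_erase.mp haJ).2
    have hbI : b ∈ I := (Finset.mem_erase.mp hbJ).2
    -- J is the interval [p, m]
    have hJiv : J = iv n p (m+1) := by
      ext v
      rw [mem_iv]
      constructor
      · intro hv
        have h1 : p ≤ v.val := Finset.min'_le _ _ (Finset.mem_image_of_mem _ hv)
        have h2 : v.val ≤ m := Finset.le_max' _ _ (Finset.mem_image_of_mem _ hv)
        exact ⟨h1, by omega⟩
      · rintro ⟨h1, h2⟩
        have hvI : v ∈ I := by
          by_cases hvp : v.val = p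
          · rwa [show v = a from Fin.ext (by omega)]
          · have := conn_gap hc haI hbI v.val (by omega) (by omega) (by omega)
            rwa [show v = ⟨v.val, by omega⟩ from Fin.ext rfl]
        refine Finset.mem_erase.mpr ⟨?_, hvI⟩
        intro e
        have := congrArg Fin.val e
        simp [Fin.last] at this
        omega
    by_cases hlast : Fin.last n ∈ I
    · have hIJ : I = insert (Fin.last n) J := by
        ext v
        rw [Finset.mem_insert]
        constructor
        · intro hv
          by_cases hvl : v = Fin.last n
          · exact Or.inl hvl
          · exact Or.inr (Finset.mem_erase.mpr ⟨hvl, hv⟩)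
        · rintro (rfl | hv)
          · exact hlast
          · exact (Finset.mem_erase.mp hv).2
      have hp1 : p ≤ 1 := by
        rcases conn_attach hc hlast haI (by omega) with h | h
        · have h0 : (⟨0, by omega⟩ : Fin (n+1)) ∈ J := by
            refine Finset.mem_erase.mpr ⟨?_, h⟩
            intro e; rw [Fin.ext_iff] at e; simp [Fin.val_last] at e; omega
          have h00 : (0:ℕ) ∈ vals := by
            rw [hvals']; exact Finset.mem_image.mpr ⟨_, h0, rfl⟩
          have hle := Finset.min'_le vals 0 h00
          rw [← hp] at hle
          omega
        · have h0 : (⟨1, by omega⟩ : Fin (n+1)) ∈ J := by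
            refine Finset.mem_erase.mpr ⟨?_, h⟩
            intro e; rw [Fin.ext_iff] at e; simp [Fin.val_last] at e; omega
          have h00 : (1:ℕ) ∈ vals := by
            rw [hvals']; exact Finset.mem_image.mpr ⟨_, h0, rfl⟩
          have hle := Finset.min'_le vals 1 h00
          rw [← hp] at hle
          omega
      interval_cases p
      · -- bset (m+1)
        right; left
        refine ⟨m+1, by omega, ?_⟩
        rw [hIJ, hJiv]
        rfl
      · -- cset (m+1)
        right; right
        refine ⟨m+1, by omega, by omega, ?_⟩
        rw [hIJ, hJiv]
        rfl
    · left
      refine ⟨p, m+1, by omega, by omega, ?_⟩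
      rw [← hJiv, hJ]
      exact (Finset.erase_eq_of_notMem hlast).symm

lemma conn_iff {I : Finset (Fin (n+1))} (hn : 2 ≤ n) :
    ConnSet (pathTriangle n 1) I ↔ Good n I :=
  ⟨conn_good hn, good_conn⟩

end Charac
section Blocks
open Classical
variable {n : ℕ}

lemma initSeg_eq_iv (m : ℕ) : initSeg n m = iv n 0 m := by
  ext v; simp [initSeg, iv]

lemma bset_one : ({0, Fin.last n} : Finset (Fin (n+1))) = bset n 1 := by
  ext v
  simp only [Finset.mem_insert, Finset.mem_singleton, mem_bset]
  constructor
  · rintro (rfl | rfl)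
    · right; simp
    · left; rfl
  · rintro (rfl | h)
    · right; rfl
    · left; apply Fin.ext; simpa using h

lemma blockP_zero : blockP n 0 = ∅ := by rw [blockP]
lemma blockP_one : blockP n 1 = {linForm (bset n 1)} := by rw [blockP, bset_one]
lemma blockP_two : blockP n 2 = insert (linForm (bset n 0))
    ((Finset.range n).image fun m => linForm (iv n 0 (m + 1))) := by
  rw [blockP, bset_zero]
  congr 1
  apply Finset.image_congr
  intro m _
  simp only []
  rw [initSeg_eq_iv]

lemma blockP_succ3 (i : ℕ) : blockP n (i+3) = condSet n (i+3) \
    ((Finset.range (i + 3)).attach.biUnion fun j => blockP n j.val) := by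
  rw [blockP]

end Blocks
section Blocks2
open Classical
variable {n : ℕ}

lemma mem_csaForms {f : (Fin (n+1) → ℚ) →ₗ[ℚ] ℚ} :
    f ∈ csaForms (pathTriangle n 1) ↔
      ∃ I, ConnSet (pathTriangle n 1) I ∧ linForm I = f := by
  simp [csaForms]

lemma mem_condSet {i : ℕ} {f : (Fin (n+1) → ℚ) →ₗ[ℚ] ℚ} :
    f ∈ condSet n i ↔ ∃ I, ConnSet (pathTriangle n 1) I ∧
      (∀ v ∈ I, v.val + 1 < i ∨ v.val = n) ∧ linForm I = f := by
  simp only [condSet, Finset.mem_image, Finset.mem_filter, Finset.mem_univ, true_and]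
  tauto

lemma mem_blockP_two {f : (Fin (n+1) → ℚ) →ₗ[ℚ] ℚ} :
    f ∈ blockP n 2 ↔ f = linForm (bset n 0) ∨
      ∃ q, 1 ≤ q ∧ q ≤ n ∧ f = linForm (iv n 0 q) := by
  rw [blockP_two]
  simp only [Finset.mem_insert, Finset.mem_image, Finset.mem_range]
  constructor
  · rintro (rfl | ⟨m, hm, rfl⟩)
    · exact Or.inl rfl
    · exact Or.inr ⟨m+1, by omega, by omega, rfl⟩
  · rintro (rfl | ⟨q, h1, h2, rfl⟩)
    · exact Or.inl rfl
    · exact Or.inr ⟨q-1, by omega, by rw [show q - 1 + 1 = q by omega]⟩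

lemma iv_bound {p q i : ℕ} (hpq : p < q) (hqn : q ≤ n) :
    (∀ v ∈ iv n p q, v.val + 1 < i ∨ v.val = n) ↔ q < i := by
  constructor
  · intro h
    have := h ⟨q-1, by omega⟩ (by rw [mem_iv]; simp; omega)
    simp at this
    omega
  · intro h v hv
    rw [mem_iv] at hv
    omega

lemma bset_bound {q i : ℕ} (h1 : 1 ≤ q) (hqn : q ≤ n) :
    (∀ v ∈ bset n q, v.val + 1 < i ∨ v.val = n) ↔ q < i := by
  constructor
  · intro h
    have := h ⟨q-1, by omega⟩ (by rw [mem_bset]; right; simp; omega)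
    simp at this
    omega
  · intro h v hv
    rw [mem_bset] at hv
    rcases hv with rfl | hv
    · right; simp
    · omega

lemma bset_zero_bound {i : ℕ} :
    ∀ v ∈ bset n 0, v.val + 1 < i ∨ v.val = n := by
  intro v hv
  rw [mem_bset] at hv
  rcases hv with rfl | hv
  · right; simp
  · omega

lemma cset_bound {q i : ℕ} (h1 : 2 ≤ q) (hqn : q ≤ n) :
    (∀ v ∈ cset n q, v.val + 1 < i ∨ v.val = n) ↔ q < i := by
  constructor
  · intro h
    have := h ⟨q-1, by omega⟩ (by rw [mem_cset]; right; simp; omega)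
    simp at this
    omega
  · intro h v hv
    rw [mem_cset] at hv
    rcases hv with rfl | hv
    · right; simp
    · omega

lemma mem_condSet_iff (hn : 2 ≤ n) {i : ℕ} {f : (Fin (n+1) → ℚ) →ₗ[ℚ] ℚ} :
    f ∈ condSet n i ↔
      (∃ p q, p < q ∧ q ≤ n ∧ q < i ∧ f = linForm (iv n p q)) ∨
      (∃ q, q ≤ n ∧ (q = 0 ∨ q < i) ∧ f = linForm (bset n q)) ∨
      (∃ q, 2 ≤ q ∧ q ≤ n ∧ q < i ∧ f = linForm (cset n q)) := by
  rw [mem_condSet]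
  constructor
  · rintro ⟨I, hc, hb, rfl⟩
    rcases conn_good hn hc with ⟨p, q, h1, h2, rfl⟩ | ⟨q, h1, rfl⟩ | ⟨q, h1, h2, rfl⟩
    · exact Or.inl ⟨p, q, h1, h2, (iv_bound h1 h2).mp hb, rfl⟩
    · rcases Nat.eq_zero_or_pos q with rfl | hq1
      · exact Or.inr (Or.inl ⟨0, by omega, Or.inl rfl, rfl⟩)
      · exact Or.inr (Or.inl ⟨q, h1, Or.inr ((bset_bound hq1 h1).mp hb), rfl⟩)
    · exact Or.inr (Or.inr ⟨q, h1, h2, (cset_bound h1 h2).mp hb, rfl⟩)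
  · rintro (⟨p, q, h1, h2, h3, rfl⟩ | ⟨q, h1, h2, rfl⟩ | ⟨q, h1, h2, h3, rfl⟩)
    · exact ⟨_, good_conn (Or.inl ⟨p, q, h1, h2, rfl⟩), (iv_bound h1 h2).mpr h3, rfl⟩
    · refine ⟨_, good_conn (Or.inr (Or.inl ⟨q, h1, rfl⟩)), ?_, rfl⟩
      rcases Nat.eq_zero_or_pos q with rfl | hq
      · exact bset_zero_bound
      · exact (bset_bound hq h1).mpr (by omega)
    · exact ⟨_, good_conn (Or.inr (Or.inr ⟨q, h1, h2, rfl⟩)), (cset_bound h1 h2).mpr h3, rfl⟩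

lemma mem_csaForms_iff (hn : 2 ≤ n) {f : (Fin (n+1) → ℚ) →ₗ[ℚ] ℚ} :
    f ∈ csaForms (pathTriangle n 1) ↔
      (∃ p q, p < q ∧ q ≤ n ∧ f = linForm (iv n p q)) ∨
      (∃ q, q ≤ n ∧ f = linForm (bset n q)) ∨
      (∃ q, 2 ≤ q ∧ q ≤ n ∧ f = linForm (cset n q)) := by
  rw [mem_csaForms]
  constructor
  · rintro ⟨I, hc, rfl⟩
    rcases conn_good hn hc with ⟨p, q, h1, h2, rfl⟩ | ⟨q, h1, rfl⟩ | ⟨q, h1, h2, rfl⟩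
    · exact Or.inl ⟨p, q, h1, h2, rfl⟩
    · exact Or.inr (Or.inl ⟨q, h1, rfl⟩)
    · exact Or.inr (Or.inr ⟨q, h1, h2, rfl⟩)
  · rintro (⟨p, q, h1, h2, rfl⟩ | ⟨q, h1, rfl⟩ | ⟨q, h1, h2, rfl⟩)
    · exact ⟨_, good_conn (Or.inl ⟨p, q, h1, h2, rfl⟩), rfl⟩
    · exact ⟨_, good_conn (Or.inr (Or.inl ⟨q, h1, rfl⟩)), rfl⟩
    · exact ⟨_, good_conn (Or.inr (Or.inr ⟨q, h1, h2, rfl⟩)), rfl⟩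

lemma condSet_mono {i j : ℕ} (h : i ≤ j) : condSet n i ⊆ condSet n j := by
  intro f hf
  rw [mem_condSet] at hf ⊢
  obtain ⟨I, hc, hb, rfl⟩ := hf
  exact ⟨I, hc, fun v hv => by rcases hb v hv with h' | h' <;> omega, rfl⟩

lemma mem_cumB {N : ℕ} {f : (Fin (n+1) → ℚ) →ₗ[ℚ] ℚ} :
    (f ∈ ((Finset.range N).attach.biUnion fun j => blockP n j.val)) ↔
      ∃ j, j < N ∧ f ∈ blockP n j := by
  simp only [Finset.mem_biUnion, Finset.mem_attach, true_and, Subtype.exists,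
    Finset.mem_range, exists_prop]

lemma mem_blockP_succ3 {i : ℕ} {f : (Fin (n+1) → ℚ) →ₗ[ℚ] ℚ} :
    f ∈ blockP n (i+3) ↔ f ∈ condSet n (i+3) ∧ ¬ ∃ j, j < i+3 ∧ f ∈ blockP n j := by
  rw [blockP_succ3, Finset.mem_sdiff, mem_cumB]

lemma cum_mem (hn : 2 ≤ n) : ∀ i, 2 ≤ i → ∀ f : (Fin (n+1) → ℚ) →ₗ[ℚ] ℚ,
    (∃ j, j < i + 1 ∧ f ∈ blockP n j) ↔ (f ∈ condSet n i ∨ f ∈ blockP n 2) := by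
  intro i hi
  induction i, hi using Nat.le_induction with
  | base =>
    intro f
    constructor
    · rintro ⟨j, hj, hf⟩
      interval_cases j
      · rw [blockP_zero] at hf; simp at hf
      · rw [blockP_one] at hf
        simp at hf
        subst hf
        left
        rw [mem_condSet_iff hn]
        exact Or.inr (Or.inl ⟨1, by omega, Or.inr (by omega), rfl⟩)
      · exact Or.inr hf
    · rintro (hf | hf)
      · rw [mem_condSet_iff hn] at hf
        rcases hf with ⟨p, q, h1, h2, h3, rfl⟩ | ⟨q, h1, h2, rfl⟩ | ⟨q, h1, h2, h3, rfl⟩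
        · refine ⟨2, by omega, ?_⟩
          rw [mem_blockP_two]
          have hp : p = 0 := by omega
          have hq : q = 1 := by omega
          subst hp; subst hq
          exact Or.inr ⟨1, by omega, by omega, rfl⟩
        · rcases Nat.eq_zero_or_pos q with rfl | hq
          · exact ⟨2, by omega, by rw [mem_blockP_two]; exact Or.inl rfl⟩
          · have hq1 : q = 1 := by omega
            subst hq1
            exact ⟨1, by omega, by rw [blockP_one]; simp⟩
        · omega
      · exact ⟨2, by omega, hf⟩
  | succ m hm ih =>
    intro f
    obtain ⟨k, hk⟩ : ∃ k, m + 1 = k + 3 := ⟨m - 2, by omega⟩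
    constructor
    · rintro ⟨j, hj, hf⟩
      rcases Nat.lt_or_ge j (m+1) with h | h
      · rcases (ih f).mp ⟨j, h, hf⟩ with h' | h'
        · exact Or.inl (condSet_mono (by omega) h')
        · exact Or.inr h'
      · have hjm : j = m + 1 := by omega
        subst hjm
        rw [hk, mem_blockP_succ3, ← hk] at hf
        exact Or.inl hf.1
    · rintro (hf | hf)
      · by_cases hf' : f ∈ condSet n m ∨ f ∈ blockP n 2
        · obtain ⟨j, hj, hfj⟩ := (ih f).mpr hf'
          exact ⟨j, by omega, hfj⟩
        · refine ⟨m+1, by omega, ?_⟩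
          rw [hk, mem_blockP_succ3, ← hk]
          refine ⟨hf, ?_⟩
          intro hco
          exact hf' ((ih f).mp hco)
      · exact ⟨2, by omega, hf⟩

lemma mem_blockP_big0 (hn : 2 ≤ n) {q : ℕ} (h2 : 2 ≤ q) {f : (Fin (n+1) → ℚ) →ₗ[ℚ] ℚ} :
    f ∈ blockP n (q+1) ↔
      f ∈ condSet n (q+1) ∧ ¬(f ∈ condSet n q ∨ f ∈ blockP n 2) := by
  obtain ⟨k, hk⟩ : ∃ k, q + 1 = k + 3 := ⟨q - 2, by omega⟩
  rw [hk, mem_blockP_succ3, ← hk]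
  constructor
  · rintro ⟨h1, h2'⟩
    refine ⟨h1, ?_⟩
    intro hco
    exact h2' ((cum_mem hn q (by omega) f).mpr hco)
  · rintro ⟨h1, h2'⟩
    refine ⟨h1, ?_⟩
    intro hco
    exact h2' ((cum_mem hn q (by omega) f).mp hco)

end Blocks2
section BlockShapes
open Classical
variable {n : ℕ}

lemma mem_blockP_big (hn : 2 ≤ n) {q : ℕ} (h2 : 2 ≤ q) (hq : q ≤ n)
    {f : (Fin (n+1) → ℚ) →ₗ[ℚ] ℚ} :
    f ∈ blockP n (q+1) ↔
      (∃ p, 1 ≤ p ∧ p < q ∧ f = linForm (iv n p q)) ∨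
      f = linForm (bset n q) ∨ f = linForm (cset n q) := by
  rw [mem_blockP_big0 hn h2]
  constructor
  · rintro ⟨H1, H2⟩
    rw [mem_condSet_iff hn] at H1
    rcases H1 with ⟨p, q', h1, h2', h3, rfl⟩ | ⟨q', h1, hd, rfl⟩ | ⟨q', hc2, h1, h3, rfl⟩
    · by_cases hlt : q' < q
      · exact absurd (Or.inl ((mem_condSet_iff hn).mpr
          (Or.inl ⟨p, q', h1, h2', hlt, rfl⟩))) H2
      · have hq' : q' = q := by omega
        subst hq'
        rcases Nat.eq_zero_or_pos p with rfl | hp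
        · exact absurd (Or.inr (mem_blockP_two.mpr
            (Or.inr ⟨q', by omega, h2', rfl⟩))) H2
        · exact Or.inl ⟨p, hp, h1, rfl⟩
    · rcases Nat.eq_zero_or_pos q' with rfl | hq1
      · exact absurd (Or.inr (mem_blockP_two.mpr (Or.inl rfl))) H2
      · by_cases hlt : q' < q
        · exact absurd (Or.inl ((mem_condSet_iff hn).mpr
            (Or.inr (Or.inl ⟨q', h1, Or.inr hlt, rfl⟩)))) H2
        · have hq' : q' = q := by omega
          subst hq'
          exact Or.inr (Or.inl rfl)
    · by_cases hlt : q' < q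
      · exact absurd (Or.inl ((mem_condSet_iff hn).mpr
          (Or.inr (Or.inr ⟨q', hc2, h1, hlt, rfl⟩)))) H2
      · have hq' : q' = q := by omega
        subst hq'
        exact Or.inr (Or.inr rfl)
  · rintro (⟨p, hp1, hpq, rfl⟩ | rfl | rfl)
    · refine ⟨(mem_condSet_iff hn).mpr (Or.inl ⟨p, q, hpq, hq, by omega, rfl⟩), ?_⟩
      rintro (hco | hco)
      · rw [mem_condSet_iff hn] at hco
        rcases hco with ⟨p', q'', h1, h2', h3, he⟩ | ⟨q'', h1, hd, he⟩ | ⟨q'', hc2, h1, h3, he⟩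
        · obtain ⟨e1, e2⟩ := iv_inj hpq hq h1 h2' (linForm_inj he)
          omega
        · exact bset_ne_iv hq (linForm_inj he).symm
        · exact cset_ne_iv hq (linForm_inj he).symm
      · rw [mem_blockP_two] at hco
        rcases hco with he | ⟨q'', h1, h2', he⟩
        · exact bset_ne_iv hq (linForm_inj he).symm
        · obtain ⟨e1, e2⟩ := iv_inj hpq hq (by omega : 0 < q'') h2' (linForm_inj he)
          omega
    · refine ⟨(mem_condSet_iff hn).mpr (Or.inr (Or.inl ⟨q, hq, Or.inr (by omega), rfl⟩)), ?_⟩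
      rintro (hco | hco)
      · rw [mem_condSet_iff hn] at hco
        rcases hco with ⟨p', q'', h1, h2', h3, he⟩ | ⟨q'', h1, hd, he⟩ | ⟨q'', hc2, h1, h3, he⟩
        · exact bset_ne_iv h2' (linForm_inj he)
        · have := bset_inj hq h1 (linForm_inj he)
          omega
        · exact bset_ne_cset (by omega) (by omega) (linForm_inj he)
      · rw [mem_blockP_two] at hco
        rcases hco with he | ⟨q'', h1, h2', he⟩
        · have := bset_inj hq (by omega : (0:ℕ) ≤ n) (linForm_inj he)
          omega
        · exact bset_ne_iv h2' (linForm_inj he)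
    · refine ⟨(mem_condSet_iff hn).mpr (Or.inr (Or.inr ⟨q, h2, hq, by omega, rfl⟩)), ?_⟩
      rintro (hco | hco)
      · rw [mem_condSet_iff hn] at hco
        rcases hco with ⟨p', q'', h1, h2', h3, he⟩ | ⟨q'', h1, hd, he⟩ | ⟨q'', hc2, h1, h3, he⟩
        · exact cset_ne_iv h2' (linForm_inj he)
        · rcases Nat.eq_zero_or_pos q'' with rfl | hq1
          · exact bset_zero_ne_cset h2 hq (linForm_inj he).symm
          · exact bset_ne_cset hq1 (by omega) (linForm_inj he).symm
        · have := cset_inj hq h1 h2 hc2 (linForm_inj he)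
          omega
      · rw [mem_blockP_two] at hco
        rcases hco with he | ⟨q'', h1, h2', he⟩
        · exact bset_zero_ne_cset h2 hq (linForm_inj he).symm
        · exact cset_ne_iv h2' (linForm_inj he)

lemma mem_block (hn : 2 ≤ n) (b : Fin (n+1)) {f : (Fin (n+1) → ℚ) →ₗ[ℚ] ℚ} :
    f ∈ blockP n (b.val+1) ↔
      (b.val = 0 ∧ f = linForm (bset n 1)) ∨
      (b.val = 1 ∧ (f = linForm (bset n 0) ∨
        ∃ q, 1 ≤ q ∧ q ≤ n ∧ f = linForm (iv n 0 q))) ∨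
      (2 ≤ b.val ∧ ((∃ p, 1 ≤ p ∧ p < b.val ∧ f = linForm (iv n p b.val)) ∨
        f = linForm (bset n b.val) ∨ f = linForm (cset n b.val))) := by
  have hbn : b.val ≤ n := by omega
  rcases Nat.lt_or_ge b.val 2 with hb | hb
  · interval_cases h : b.val
    · rw [show (0:ℕ)+1 = 1 from rfl, blockP_one]
      simp only [Finset.mem_singleton]
      constructor
      · intro he; exact Or.inl ⟨by simp, he⟩
      · rintro (⟨_, he⟩ | ⟨hc, _⟩ | ⟨hc, _⟩) <;> first | exact he | omega
    · rw [show (1:ℕ)+1 = 2 from rfl, mem_blockP_two]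
      constructor
      · intro he; exact Or.inr (Or.inl ⟨by simp, he⟩)
      · rintro (⟨hc, _⟩ | ⟨_, he⟩ | ⟨hc, _⟩) <;> first | exact he | omega
  · rw [mem_blockP_big hn hb hbn]
    constructor
    · intro he; exact Or.inr (Or.inr ⟨hb, he⟩)
    · rintro (⟨hc, _⟩ | ⟨hc, _⟩ | ⟨_, he⟩) <;> first | exact he | omega

end BlockShapes
section Conds
open Classical
variable {n : ℕ}

lemma block_nonempty (hn : 2 ≤ n) (b : Fin (n+1)) : (blockP n (b.val+1)).Nonempty := by
  rcases Nat.lt_or_ge b.val 2 with hb | hb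
  · rcases Nat.lt_or_ge b.val 1 with h0 | h1
    · exact ⟨linForm (bset n 1), (mem_block hn b).mpr (Or.inl ⟨by omega, rfl⟩)⟩
    · exact ⟨linForm (bset n 0), (mem_block hn b).mpr (Or.inr (Or.inl ⟨by omega, Or.inl rfl⟩))⟩
  · exact ⟨linForm (bset n b.val),
      (mem_block hn b).mpr (Or.inr (Or.inr ⟨hb, Or.inr (Or.inl rfl)⟩))⟩

lemma block_subset (hn : 2 ≤ n) (b : Fin (n+1)) :
    blockP n (b.val+1) ⊆ csaForms (pathTriangle n 1) := by
  intro f hf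
  have hbn : b.val ≤ n := by omega
  rw [mem_block hn b] at hf
  rw [mem_csaForms_iff hn]
  rcases hf with ⟨h0, rfl⟩ | ⟨h1, (rfl | ⟨q, hq1, hq2, rfl⟩)⟩ | ⟨h2, hf⟩
  · exact Or.inr (Or.inl ⟨1, by omega, rfl⟩)
  · exact Or.inr (Or.inl ⟨0, by omega, rfl⟩)
  · exact Or.inl ⟨0, q, by omega, hq2, rfl⟩
  · rcases hf with ⟨p, hp1, hp2, rfl⟩ | rfl | rfl
    · exact Or.inl ⟨p, b.val, hp2, hbn, rfl⟩
    · exact Or.inr (Or.inl ⟨b.val, hbn, rfl⟩)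
    · exact Or.inr (Or.inr ⟨b.val, h2, hbn, rfl⟩)

lemma block_mem_unique (hn : 2 ≤ n) {b b' : Fin (n+1)} {f : (Fin (n+1) → ℚ) →ₗ[ℚ] ℚ}
    (h : f ∈ blockP n (b.val+1)) (h' : f ∈ blockP n (b'.val+1)) : b = b' := by
  have hbn : b.val ≤ n := by omega
  have hbn' : b'.val ≤ n := by omega
  rw [mem_block hn b] at h
  rw [mem_block hn b'] at h'
  apply Fin.ext
  rcases h with ⟨h0, rfl⟩ | ⟨h1, (rfl | ⟨q, hq1, hq2, rfl⟩)⟩ | ⟨h2, hf⟩ <;>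
    rcases h' with ⟨h0', e'⟩ | ⟨h1', (e' | ⟨q', hq1', hq2', e'⟩)⟩ | ⟨h2', hf'⟩
  -- f = bset 1 cases
  · omega
  · exact absurd (bset_inj (by omega) (by omega) (linForm_inj e')) (by omega)
  · exact absurd (linForm_inj e') (bset_ne_iv hq2')
  · rcases hf' with ⟨p', hp1', hp2', e'⟩ | e' | e'
    · exact absurd (linForm_inj e') (bset_ne_iv hbn')
    · exact absurd (bset_inj (by omega) hbn' (linForm_inj e')) (by omega)
    · exact absurd (linForm_inj e') (bset_ne_cset (by omega) (by omega))
  -- f = bset 0 cases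
  · exact absurd (bset_inj (by omega) (by omega) (linForm_inj e')) (by omega)
  · omega
  · exact absurd (linForm_inj e') (bset_ne_iv hq2')
  · rcases hf' with ⟨p', hp1', hp2', e'⟩ | e' | e'
    · exact absurd (linForm_inj e') (bset_ne_iv hbn')
    · exact absurd (bset_inj (by omega) hbn' (linForm_inj e')) (by omega)
    · exact absurd (linForm_inj e') (bset_zero_ne_cset (by omega) hbn')
  -- f = iv 0 q cases
  · exact absurd (linForm_inj e').symm (bset_ne_iv hq2)
  · exact absurd (linForm_inj e').symm (bset_ne_iv hq2)
  · omega
  · rcases hf' with ⟨p', hp1', hp2', e'⟩ | e' | e'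
    · obtain ⟨e1, e2⟩ := iv_inj (by omega) hq2 (by omega) hbn' (linForm_inj e')
      omega
    · exact absurd (linForm_inj e').symm (bset_ne_iv hq2)
    · exact absurd (linForm_inj e').symm (cset_ne_iv hq2)
  -- f with top b.val ≥ 2
  · rcases hf with ⟨p, hp1, hp2, e⟩ | e | e
    · exact absurd (linForm_inj (e.symm.trans e')) (bset_ne_iv hbn).symm
    · exact absurd (bset_inj hbn (by omega) (linForm_inj (e.symm.trans e'))) (by omega)
    · exact absurd (linForm_inj (e.symm.trans e')).symm (bset_ne_cset (by omega) (by omega))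
  · rcases hf with ⟨p, hp1, hp2, e⟩ | e | e
    · exact absurd (linForm_inj (e.symm.trans e')) (bset_ne_iv hbn).symm
    · exact absurd (bset_inj hbn (by omega) (linForm_inj (e.symm.trans e'))) (by omega)
    · exact absurd (linForm_inj (e.symm.trans e')).symm (bset_zero_ne_cset (by omega) hbn)
  · rcases hf with ⟨p, hp1, hp2, e⟩ | e | e
    · obtain ⟨e1, e2⟩ := iv_inj hp2 hbn (by omega) hq2' (linForm_inj (e.symm.trans e'))
      omega
    · exact absurd (linForm_inj (e.symm.trans e')) (bset_ne_iv hq2')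
    · exact absurd (linForm_inj (e.symm.trans e')) (cset_ne_iv hq2')
  · rcases hf with ⟨p, hp1, hp2, e⟩ | e | e <;>
      rcases hf' with ⟨p', hp1', hp2', e'⟩ | e' | e'
    · obtain ⟨e1, e2⟩ := iv_inj hp2 hbn hp2' hbn' (linForm_inj (e.symm.trans e'))
      omega
    · exact absurd (linForm_inj (e.symm.trans e')).symm (bset_ne_iv hbn)
    · exact absurd (linForm_inj (e.symm.trans e')).symm (cset_ne_iv hbn)
    · exact absurd (linForm_inj (e.symm.trans e')) (bset_ne_iv hbn')
    · exact bset_inj hbn hbn' (linForm_inj (e.symm.trans e'))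
    · exact absurd (linForm_inj (e.symm.trans e')) (bset_ne_cset (by omega) (by omega))
    · exact absurd (linForm_inj (e.symm.trans e')) (cset_ne_iv hbn')
    · exact absurd (linForm_inj (e.symm.trans e')).symm (bset_ne_cset (by omega) (by omega))
    · exact cset_inj hbn hbn' h2 h2' (linForm_inj (e.symm.trans e'))

lemma block_cover (hn : 2 ≤ n) {f : (Fin (n+1) → ℚ) →ₗ[ℚ] ℚ}
    (hf : f ∈ csaForms (pathTriangle n 1)) : ∃ b : Fin (n+1), f ∈ blockP n (b.val+1) := by
  rw [mem_csaForms_iff hn] at hf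
  rcases hf with ⟨p, q, h1, h2, rfl⟩ | ⟨q, h1, rfl⟩ | ⟨q, h1, h2, rfl⟩
  · rcases Nat.eq_zero_or_pos p with rfl | hp
    · exact ⟨⟨1, by omega⟩, (mem_block hn _).mpr
        (Or.inr (Or.inl ⟨rfl, Or.inr ⟨q, by omega, h2, rfl⟩⟩))⟩
    · refine ⟨⟨q, by omega⟩, (mem_block hn _).mpr
        (Or.inr (Or.inr ⟨?_, Or.inl ⟨p, hp, ?_, ?_⟩⟩))⟩
      · exact (by omega : 2 ≤ q)
      · exact h1
      · rfl
  · rcases Nat.eq_zero_or_pos q with rfl | hq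
    · exact ⟨⟨1, by omega⟩, (mem_block hn _).mpr (Or.inr (Or.inl ⟨rfl, Or.inl rfl⟩))⟩
    · rcases Nat.eq_or_lt_of_le hq with hq1 | hq2
      · exact ⟨⟨0, by omega⟩, (mem_block hn _).mpr (Or.inl ⟨rfl, by rw [← hq1]⟩)⟩
      · exact ⟨⟨q, by omega⟩, (mem_block hn _).mpr
          (Or.inr (Or.inr ⟨(by omega : 2 ≤ q), Or.inr (Or.inl rfl)⟩))⟩
  · exact ⟨⟨q, by omega⟩, (mem_block hn _).mpr
      (Or.inr (Or.inr ⟨(by omega : 2 ≤ q), Or.inr (Or.inr rfl)⟩))⟩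

end Conds
section Indep
open Classical
variable {n : ℕ}

lemma linForm_singleton (a : Fin n) (x : Fin n → ℚ) : linForm {a} x = x a := by
  rw [linForm_apply, Finset.sum_singleton]

lemma linForm_empty : linForm (∅ : Finset (Fin n)) = 0 := by
  unfold linForm
  exact Finset.sum_empty

lemma iv_zero {p : ℕ} : iv n p 0 = ∅ := by
  ext v; simp [mem_iv]

lemma iv_single {j : ℕ} (hj : j ≤ n) : iv n j (j+1) = {(⟨j, by omega⟩ : Fin (n+1))} := by
  ext v
  simp only [mem_iv, Finset.mem_singleton]
  constructor
  · intro h; apply Fin.ext; simp; omega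
  · rintro rfl; simp

lemma blocks_ker (hn : 2 ≤ n) (g : Fin (n+1) → ((Fin (n+1) → ℚ) →ₗ[ℚ] ℚ))
    (hg : ∀ b, g b ∈ blockP n (b.val+1)) (x : Fin (n+1) → ℚ)
    (hx : ∀ b, g b x = 0) : x = 0 := by
  have hLast : linForm (bset n 0) x = x (Fin.last n) := by
    rw [bset_zero, linForm_singleton]
  have hIV : ∀ p q r : ℕ, p ≤ q → q ≤ r →
      linForm (iv n p q) x + linForm (iv n q r) x = linForm (iv n p r) x := by
    intro p q r h1 h2
    rw [← LinearMap.add_apply, linForm_iv_add h1 h2]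
  have hB : ∀ q : ℕ, q ≤ n →
      linForm (bset n q) x = x (Fin.last n) + linForm (iv n 0 q) x := by
    intro q hq
    rw [linForm_bset hq, LinearMap.add_apply, hLast]
  have hC : ∀ q : ℕ, q ≤ n →
      linForm (cset n q) x = x (Fin.last n) + linForm (iv n 1 q) x := by
    intro q hq
    rw [linForm_cset hq, LinearMap.add_apply, hLast]
  have hb0 := (mem_block hn ⟨0, by omega⟩).mp (hg ⟨0, by omega⟩)
  have hb1 := (mem_block hn ⟨1, by omega⟩).mp (hg ⟨1, by omega⟩)
  have h1 : linForm (iv n 0 1) x = -(x (Fin.last n)) := by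
    rcases hb0 with ⟨_, he⟩ | ⟨hc, _⟩ | ⟨hc, _⟩
    · have hx0 := hx ⟨0, by omega⟩
      rw [he, hB 1 (by omega)] at hx0
      linarith
    · simp at hc
    · simp at hc
  have hstep : ∀ t, 1 ≤ t → t ≤ n →
      linForm (iv n 0 t) x = -(x (Fin.last n)) ∨
      linForm (iv n 0 t) x = -(2 * x (Fin.last n)) := by
    intro t
    induction t using Nat.strong_induction_on with
    | _ t ih =>
      intro ht1 htn
      rcases Nat.eq_or_lt_of_le ht1 with h | h
      · left; rw [← h]; exact h1
      · have hbt := (mem_block hn ⟨t, by omega⟩).mp (hg ⟨t, by omega⟩)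
        have hxt := hx ⟨t, by omega⟩
        rcases hbt with ⟨hc, _⟩ | ⟨hc, _⟩ | ⟨_, hf⟩
        · simp at hc; omega
        · simp at hc; omega
        · rcases hf with ⟨p, hp1, hp2, he⟩ | he | he
          · rw [he] at hxt
            have hsum := hIV 0 p t (by omega) (le_of_lt hp2)
            have hrec := ih p hp2 hp1 (by omega)
            have heq : linForm (iv n 0 t) x = linForm (iv n 0 p) x := by linarith
            rw [heq]
            exact hrec
          · rw [he, hB t (by omega)] at hxt
            left; linarith
          · rw [he, hC t (by omega)] at hxt
            have hsum := hIV 0 1 t (by omega) (by omega)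
            right; linarith
  have hτ0 : x (Fin.last n) = 0 := by
    rcases hb1 with ⟨hc, _⟩ | ⟨_, (he | ⟨q, hq1, hq2, he⟩)⟩ | ⟨hc, _⟩
    · simp at hc
    · have hx1 := hx ⟨1, by omega⟩
      rw [he, hLast] at hx1
      exact hx1
    · have hx1 := hx ⟨1, by omega⟩
      rw [he] at hx1
      rcases hstep q hq1 hq2 with h | h <;> linarith
    · simp at hc
  have hzero : ∀ t, t ≤ n → linForm (iv n 0 t) x = 0 := by
    intro t htn
    rcases Nat.eq_zero_or_pos t with rfl | ht
    · rw [iv_zero, linForm_empty]; rfl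
    · rcases hstep t ht htn with h | h <;> rw [hτ0] at h <;> linarith
  funext j
  simp only [Pi.zero_apply]
  by_cases hj : j = Fin.last n
  · rw [hj]; exact hτ0
  · have hjn : j.val < n := by
      have h := j.isLt
      rcases Nat.lt_or_ge j.val n with h' | h'
      · exact h'
      · exact absurd (Fin.ext (by omega : j.val = n)) hj
    have hx_j := hIV 0 j.val (j.val+1) (by omega) (by omega)
    rw [iv_single (by omega), linForm_singleton] at hx_j
    have e : (⟨j.val, by omega⟩ : Fin (n+1)) = j := Fin.ext rfl
    rw [e] at hx_j
    have hz1 := hzero j.val (by omega)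
    have hz2 := hzero (j.val+1) (by omega)
    linarith

lemma blocks_indep (hn : 2 ≤ n) (g : Fin (n+1) → ((Fin (n+1) → ℚ) →ₗ[ℚ] ℚ))
    (hg : ∀ b, g b ∈ blockP n (b.val+1)) : LinearIndependent ℚ g := by
  have hker : Function.Injective (LinearMap.pi g : (Fin (n+1) → ℚ) →ₗ[ℚ] (Fin (n+1) → ℚ)) := by
    rw [← LinearMap.ker_eq_bot]
    rw [LinearMap.ker_eq_bot']
    intro m hm
    refine blocks_ker hn g hg m ?_
    intro b
    have := congrFun hm b
    simpa [LinearMap.pi_apply] using this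
  have hsurj : Function.Surjective (LinearMap.pi g : (Fin (n+1) → ℚ) →ₗ[ℚ] (Fin (n+1) → ℚ)) :=
    (LinearMap.injective_iff_surjective).mp hker
  rw [Fintype.linearIndependent_iff]
  intro c hc
  obtain ⟨x, hxc⟩ := hsurj c
  have hev : ∀ b, g b x = c b := fun b => by
    have := congrFun hxc b
    simpa [LinearMap.pi_apply] using this
  have hsum : (∑ i, c i • g i) x = 0 := by rw [hc]; rfl
  rw [LinearMap.sum_apply] at hsum
  simp only [LinearMap.smul_apply, smul_eq_mul] at hsum
  have hsum2 : ∑ i, c i * c i = 0 := by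
    rw [← hsum]
    apply Finset.sum_congr rfl
    intro i _
    rw [hev i]
  intro i
  have hnn : ∀ i ∈ Finset.univ (α := Fin (n+1)), 0 ≤ c i * c i := fun i _ => mul_self_nonneg _
  have := (Finset.sum_eq_zero_iff_of_nonneg hnn).mp hsum2 i (Finset.mem_univ i)
  exact mul_self_eq_zero.mp this

end Indep
section Loc
open Classical
variable {n : ℕ} {X : Submodule ℚ (Fin (n+1) → ℚ)}

lemma kadd {f g h : (Fin (n+1) → ℚ) →ₗ[ℚ] ℚ} (he : f + g = h)
    (h1 : X ≤ LinearMap.ker f) (h2 : X ≤ LinearMap.ker g) : X ≤ LinearMap.ker h := by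
  intro x hx
  rw [LinearMap.mem_ker]
  have e1 : f x = 0 := h1 hx
  have e2 : g x = 0 := h2 hx
  have e3 : f x + g x = h x := by rw [← LinearMap.add_apply, he]
  linarith

lemma ksub {f g h : (Fin (n+1) → ℚ) →ₗ[ℚ] ℚ} (he : f + g = h)
    (h3 : X ≤ LinearMap.ker h) (h2 : X ≤ LinearMap.ker g) : X ≤ LinearMap.ker f := by
  intro x hx
  rw [LinearMap.mem_ker]
  have e1 : h x = 0 := h3 hx
  have e2 : g x = 0 := h2 hx
  have e3 : f x + g x = h x := by rw [← LinearMap.add_apply, he]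
  linarith

-- identities
lemma I2 {q' q : ℕ} (h1 : q' ≤ q) (h2 : q ≤ n) :
    linForm (bset n q') + linForm (iv n q' q) = linForm (bset n q) := by
  rw [linForm_bset h2, linForm_bset (by omega), add_assoc,
    linForm_iv_add (by omega) h1]

lemma I3 {q' q : ℕ} (h0 : 1 ≤ q') (h1 : q' ≤ q) (h2 : q ≤ n) :
    linForm (cset n q') + linForm (iv n q' q) = linForm (cset n q) := by
  rw [linForm_cset h2, linForm_cset (by omega), add_assoc,
    linForm_iv_add h0 h1]

lemma I4 {q : ℕ} (h0 : 1 ≤ q) (h2 : q ≤ n) :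
    linForm (cset n q) + linForm (iv n 0 1) = linForm (bset n q) := by
  rw [linForm_cset h2, linForm_bset h2, add_assoc, add_comm (linForm (iv n 1 q)),
    linForm_iv_add (by omega) h0]

lemma I5 {q : ℕ} (h2 : q ≤ n) :
    linForm (bset n 0) + linForm (iv n 0 q) = linForm (bset n q) :=
  (linForm_bset h2).symm

lemma I6 {q : ℕ} (h2 : q ≤ n) :
    linForm (bset n 0) + linForm (iv n 1 q) = linForm (cset n q) :=
  (linForm_cset h2).symm

-- derivations (K f := X ≤ ker f)
lemma L1 {p q r : ℕ} (h1 : p ≤ q) (h2 : q ≤ r)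
    (k1 : X ≤ LinearMap.ker (linForm (iv n p q)))
    (k2 : X ≤ LinearMap.ker (linForm (iv n q r))) :
    X ≤ LinearMap.ker (linForm (iv n p r)) :=
  kadd (linForm_iv_add h1 h2) k1 k2

lemma L2 {p q r : ℕ} (h1 : p ≤ q) (h2 : q ≤ r)
    (k3 : X ≤ LinearMap.ker (linForm (iv n p r)))
    (k1 : X ≤ LinearMap.ker (linForm (iv n p q))) :
    X ≤ LinearMap.ker (linForm (iv n q r)) := by
  exact ksub ((add_comm _ _).trans (linForm_iv_add h1 h2)) k3 k1

lemma L3 {p q r : ℕ} (h1 : p ≤ q) (h2 : q ≤ r)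
    (k3 : X ≤ LinearMap.ker (linForm (iv n p r)))
    (k2 : X ≤ LinearMap.ker (linForm (iv n q r))) :
    X ≤ LinearMap.ker (linForm (iv n p q)) :=
  ksub (linForm_iv_add h1 h2) k3 k2

lemma L4 {q : ℕ} (h2 : q ≤ n)
    (kb : X ≤ LinearMap.ker (linForm (bset n q)))
    (kn : X ≤ LinearMap.ker (linForm (bset n 0))) :
    X ≤ LinearMap.ker (linForm (iv n 0 q)) := by
  exact ksub ((add_comm _ _).trans (I5 h2)) kb kn

lemma L5 {q : ℕ} (h2 : q ≤ n)
    (kb : X ≤ LinearMap.ker (linForm (bset n q)))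
    (kd : X ≤ LinearMap.ker (linForm (iv n 0 q))) :
    X ≤ LinearMap.ker (linForm (bset n 0)) :=
  ksub (I5 h2) kb kd

lemma L6 {q : ℕ} (h2 : q ≤ n)
    (kn : X ≤ LinearMap.ker (linForm (bset n 0)))
    (kd : X ≤ LinearMap.ker (linForm (iv n 0 q))) :
    X ≤ LinearMap.ker (linForm (bset n q)) :=
  kadd (I5 h2) kn kd

lemma L7 {q : ℕ} (h2 : q ≤ n)
    (kc : X ≤ LinearMap.ker (linForm (cset n q)))
    (kn : X ≤ LinearMap.ker (linForm (bset n 0))) :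
    X ≤ LinearMap.ker (linForm (iv n 1 q)) := by
  exact ksub ((add_comm _ _).trans (I6 h2)) kc kn

lemma L8 {q : ℕ} (h2 : q ≤ n)
    (kc : X ≤ LinearMap.ker (linForm (cset n q)))
    (kd : X ≤ LinearMap.ker (linForm (iv n 1 q))) :
    X ≤ LinearMap.ker (linForm (bset n 0)) :=
  ksub (I6 h2) kc kd

lemma L10 {q' q : ℕ} (h1 : q' ≤ q) (h2 : q ≤ n)
    (kb : X ≤ LinearMap.ker (linForm (bset n q)))
    (kb' : X ≤ LinearMap.ker (linForm (bset n q'))) :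
    X ≤ LinearMap.ker (linForm (iv n q' q)) := by
  exact ksub ((add_comm _ _).trans (I2 h1 h2)) kb kb'

lemma L11 {q' q : ℕ} (h0 : 1 ≤ q') (h1 : q' ≤ q) (h2 : q ≤ n)
    (kc : X ≤ LinearMap.ker (linForm (cset n q)))
    (kc' : X ≤ LinearMap.ker (linForm (cset n q'))) :
    X ≤ LinearMap.ker (linForm (iv n q' q)) := by
  exact ksub ((add_comm _ _).trans (I3 h0 h1 h2)) kc kc'

lemma L12 {q : ℕ} (h0 : 1 ≤ q) (h2 : q ≤ n)
    (kb : X ≤ LinearMap.ker (linForm (bset n q)))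
    (kc : X ≤ LinearMap.ker (linForm (cset n q))) :
    X ≤ LinearMap.ker (linForm (iv n 0 1)) := by
  exact ksub ((add_comm _ _).trans (I4 h0 h2)) kb kc

lemma L13 {q' q : ℕ} (h1 : q' ≤ q) (h2 : q ≤ n)
    (kb : X ≤ LinearMap.ker (linForm (bset n q)))
    (kd : X ≤ LinearMap.ker (linForm (iv n q' q))) :
    X ≤ LinearMap.ker (linForm (bset n q')) :=
  ksub (I2 h1 h2) kb kd

lemma L14 {q' q : ℕ} (h0 : 1 ≤ q') (h1 : q' ≤ q) (h2 : q ≤ n)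
    (kc : X ≤ LinearMap.ker (linForm (cset n q)))
    (kd : X ≤ LinearMap.ker (linForm (iv n q' q))) :
    X ≤ LinearMap.ker (linForm (cset n q')) :=
  ksub (I3 h0 h1 h2) kc kd

end Loc
section Single
open Classical
variable {n : ℕ}

lemma block_singleton (hn : 2 ≤ n) (X : Submodule ℚ (Fin (n+1) → ℚ))
    (hne : ∃ f, f ∈ csaForms (pathTriangle n 1) ∧ X ≤ LinearMap.ker f) :
    ∃ b : Fin (n+1), ∃ f ∈ blockP n (b.val+1), X ≤ LinearMap.ker f ∧
      ∀ g ∈ blockP n (b.val+1), X ≤ LinearMap.ker g → g = f := by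
  by_cases hKB1 : X ≤ LinearMap.ker (linForm (bset n 1))
  · refine ⟨⟨0, by omega⟩, linForm (bset n 1), ?_, hKB1, ?_⟩
    · show linForm (bset n 1) ∈ blockP n 1
      rw [blockP_one]
      exact Finset.mem_singleton_self _
    · intro g hg _
      have hg' : g ∈ blockP n 1 := hg
      rw [blockP_one, Finset.mem_singleton] at hg'
      exact hg'
  by_cases hKN : X ≤ LinearMap.ker (linForm (bset n 0))
  · by_cases hD0 : ∃ q, 1 ≤ q ∧ q ≤ n ∧ X ≤ LinearMap.ker (linForm (iv n 0 q))
    · obtain ⟨hq₀1, hq₀n, hKD⟩ := Nat.find_spec hD0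
      set q₀ := Nat.find hD0 with hq₀def
      have hq₀2 : 2 ≤ q₀ := by
        by_contra hlt
        have he : q₀ = 1 := by omega
        rw [he] at hKD
        exact hKB1 (L6 (by omega) hKN hKD)
      refine ⟨⟨q₀, by omega⟩, linForm (bset n q₀), ?_, L6 hq₀n hKN hKD, ?_⟩
      · show linForm (bset n q₀) ∈ blockP n (q₀+1)
        exact (mem_blockP_big hn hq₀2 hq₀n).mpr (Or.inr (Or.inl rfl))
      · intro g hg hKg
        have hg' : g ∈ blockP n (q₀+1) := hg
        rw [mem_blockP_big hn hq₀2 hq₀n] at hg'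
        rcases hg' with ⟨p, hp1, hp2, rfl⟩ | rfl | rfl
        · exfalso
          have hk : X ≤ LinearMap.ker (linForm (iv n 0 p)) := L3 (by omega) (by omega) hKD hKg
          exact Nat.find_min hD0 hp2 ⟨hp1, by omega, hk⟩
        · rfl
        · exfalso
          have h1q : X ≤ LinearMap.ker (linForm (iv n 1 q₀)) := L7 hq₀n hKg hKN
          have h01 : X ≤ LinearMap.ker (linForm (iv n 0 1)) := L3 (by omega) (by omega) hKD h1q
          exact Nat.find_min hD0 (by omega) ⟨by omega, by omega, h01⟩
    · refine ⟨⟨1, by omega⟩, linForm (bset n 0), ?_, hKN, ?_⟩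
      · show linForm (bset n 0) ∈ blockP n 2
        exact mem_blockP_two.mpr (Or.inl rfl)
      · intro g hg hKg
        have hg' : g ∈ blockP n 2 := hg
        rw [mem_blockP_two] at hg'
        rcases hg' with rfl | ⟨q, hq1, hq2, rfl⟩
        · rfl
        · exact absurd ⟨q, hq1, hq2, hKg⟩ hD0
  by_cases hBex : ∃ q, 1 ≤ q ∧ q ≤ n ∧ X ≤ LinearMap.ker (linForm (bset n q))
  · obtain ⟨hq₀1, hq₀n, hKB⟩ := Nat.find_spec hBex
    set q₀ := Nat.find hBex with hq₀def
    have hq₀2 : 2 ≤ q₀ := by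
      by_contra hlt
      have he : q₀ = 1 := by omega
      rw [he] at hKB
      exact hKB1 hKB
    by_cases hKC : X ≤ LinearMap.ker (linForm (cset n q₀))
    · have hD01 : X ≤ LinearMap.ker (linForm (iv n 0 1)) := L12 (by omega) hq₀n hKB hKC
      by_cases hDbig : ∃ q, 2 ≤ q ∧ q ≤ n ∧ X ≤ LinearMap.ker (linForm (iv n 0 q))
      · obtain ⟨hw2, hwn, hKw⟩ := Nat.find_spec hDbig
        set w := Nat.find hDbig with hwdef
        have hwq₀ : w ≠ q₀ := by
          intro e
          rw [e] at hKw
          exact hKN (L5 hq₀n hKB hKw)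
        refine ⟨⟨w, by omega⟩, linForm (iv n 1 w),
          ?_, L2 (by omega) (by omega) hKw hD01, ?_⟩
        · show linForm (iv n 1 w) ∈ blockP n (w+1)
          exact (mem_blockP_big hn hw2 hwn).mpr (Or.inl ⟨1, by omega, by omega, rfl⟩)
        · intro g hg hKg
          have hg' : g ∈ blockP n (w+1) := hg
          rw [mem_blockP_big hn hw2 hwn] at hg'
          rcases hg' with ⟨p, hp1, hp2, rfl⟩ | rfl | rfl
          · rcases Nat.eq_or_lt_of_le hp1 with he | hp2'
            · rw [← he]
            · exfalso
              have hk : X ≤ LinearMap.ker (linForm (iv n 0 p)) :=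
                L3 (by omega) (by omega) hKw hKg
              exact Nat.find_min hDbig hp2 ⟨by omega, by omega, hk⟩
          · exfalso
            exact hKN (L5 hwn hKg hKw)
          · exfalso
            rcases lt_trichotomy w q₀ with hlt | he | hgt
            · have h1 : X ≤ LinearMap.ker (linForm (iv n w q₀)) :=
                L11 (by omega) (by omega) hq₀n hKC hKg
              have h2 : X ≤ LinearMap.ker (linForm (bset n w)) :=
                L13 (by omega) hq₀n hKB h1
              exact hKN (L5 hwn h2 hKw)
            · exact hwq₀ he
            · have h1 : X ≤ LinearMap.ker (linForm (iv n q₀ w)) :=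
                L11 (by omega) (by omega) hwn hKg hKC
              have h2 : X ≤ LinearMap.ker (linForm (iv n 0 q₀)) :=
                L3 (by omega) (by omega) hKw h1
              exact Nat.find_min hDbig hgt ⟨hq₀2, by omega, h2⟩
      · refine ⟨⟨1, by omega⟩, linForm (iv n 0 1), ?_, hD01, ?_⟩
        · show linForm (iv n 0 1) ∈ blockP n 2
          exact mem_blockP_two.mpr (Or.inr ⟨1, by omega, by omega, rfl⟩)
        · intro g hg hKg
          have hg' : g ∈ blockP n 2 := hg
          rw [mem_blockP_two] at hg'
          rcases hg' with rfl | ⟨q, hq1, hq2, rfl⟩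
          · exact absurd hKg hKN
          · rcases Nat.eq_or_lt_of_le hq1 with he | hq1'
            · rw [← he]
            · exact absurd ⟨q, hq1', hq2, hKg⟩ hDbig
    · refine ⟨⟨q₀, by omega⟩, linForm (bset n q₀), ?_, hKB, ?_⟩
      · show linForm (bset n q₀) ∈ blockP n (q₀+1)
        exact (mem_blockP_big hn hq₀2 hq₀n).mpr (Or.inr (Or.inl rfl))
      · intro g hg hKg
        have hg' : g ∈ blockP n (q₀+1) := hg
        rw [mem_blockP_big hn hq₀2 hq₀n] at hg'
        rcases hg' with ⟨p, hp1, hp2, rfl⟩ | rfl | rfl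
        · exfalso
          have hk : X ≤ LinearMap.ker (linForm (bset n p)) := L13 (by omega) hq₀n hKB hKg
          exact Nat.find_min hBex hp2 ⟨hp1, by omega, hk⟩
        · rfl
        · exact absurd hKg hKC
  by_cases hCex : ∃ q, 2 ≤ q ∧ q ≤ n ∧ X ≤ LinearMap.ker (linForm (cset n q))
  · obtain ⟨hq₀2, hq₀n, hKC⟩ := Nat.find_spec hCex
    set q₀ := Nat.find hCex with hq₀def
    refine ⟨⟨q₀, by omega⟩, linForm (cset n q₀), ?_, hKC, ?_⟩
    · show linForm (cset n q₀) ∈ blockP n (q₀+1)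
      exact (mem_blockP_big hn hq₀2 hq₀n).mpr (Or.inr (Or.inr rfl))
    · intro g hg hKg
      have hg' : g ∈ blockP n (q₀+1) := hg
      rw [mem_blockP_big hn hq₀2 hq₀n] at hg'
      rcases hg' with ⟨p, hp1, hp2, rfl⟩ | rfl | rfl
      · exfalso
        rcases Nat.eq_or_lt_of_le hp1 with he | hp1'
        · rw [← he] at hKg
          exact hKN (L8 hq₀n hKC hKg)
        · have hk : X ≤ LinearMap.ker (linForm (cset n p)) :=
            L14 (by omega) (by omega) hq₀n hKC hKg
          exact Nat.find_min hCex hp2 ⟨by omega, by omega, hk⟩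
      · exact absurd ⟨q₀, by omega, hq₀n, hKg⟩ hBex
      · rfl
  · -- only interval forms remain
    have hD : ∃ pq : ℕ × ℕ, pq.1 < pq.2 ∧ pq.2 ≤ n ∧
        X ≤ LinearMap.ker (linForm (iv n pq.1 pq.2)) := by
      obtain ⟨f, hfF, hKf⟩ := hne
      rw [mem_csaForms_iff hn] at hfF
      rcases hfF with ⟨p, q, h1, h2, rfl⟩ | ⟨q, h1, rfl⟩ | ⟨q, h1, h2, rfl⟩
      · exact ⟨(p, q), h1, h2, hKf⟩
      · exfalso
        rcases Nat.eq_zero_or_pos q with rfl | hq1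
        · exact hKN hKf
        · exact hBex ⟨q, hq1, h1, hKf⟩
      · exact absurd ⟨q, h1, h2, hKf⟩ hCex
    by_cases hD0 : ∃ q, 1 ≤ q ∧ q ≤ n ∧ X ≤ LinearMap.ker (linForm (iv n 0 q))
    · obtain ⟨hw₁1, hw₁n, hKw₁⟩ := Nat.find_spec hD0
      set w₁ := Nat.find hD0 with hw₁def
      by_cases hD0' : ∃ q, w₁ < q ∧ q ≤ n ∧ X ≤ LinearMap.ker (linForm (iv n 0 q))
      · obtain ⟨hw₂gt, hw₂n, hKw₂⟩ := Nat.find_spec hD0'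
        set w₂ := Nat.find hD0' with hw₂def
        have hw₂2 : 2 ≤ w₂ := by omega
        refine ⟨⟨w₂, by omega⟩, linForm (iv n w₁ w₂), ?_,
          L2 (by omega) (by omega) hKw₂ hKw₁, ?_⟩
        · show linForm (iv n w₁ w₂) ∈ blockP n (w₂+1)
          exact (mem_blockP_big hn hw₂2 hw₂n).mpr (Or.inl ⟨w₁, hw₁1, by omega, rfl⟩)
        · intro g hg hKg
          have hg' : g ∈ blockP n (w₂+1) := hg
          rw [mem_blockP_big hn hw₂2 hw₂n] at hg'
          rcases hg' with ⟨p, hp1, hp2, rfl⟩ | rfl | rfl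
          · have hk : X ≤ LinearMap.ker (linForm (iv n 0 p)) :=
              L3 (by omega) (by omega) hKw₂ hKg
            rcases lt_trichotomy p w₁ with hlt | he | hgt
            · exact absurd ⟨hp1, by omega, hk⟩ (Nat.find_min hD0 hlt)
            · rw [he]
            · exact absurd ⟨hgt, by omega, hk⟩ (Nat.find_min hD0' hp2)
          · exact absurd ⟨w₂, by omega, hw₂n, hKg⟩ hBex
          · exact absurd ⟨w₂, hw₂2, hw₂n, hKg⟩ hCex
      · refine ⟨⟨1, by omega⟩, linForm (iv n 0 w₁), ?_, hKw₁, ?_⟩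
        · show linForm (iv n 0 w₁) ∈ blockP n 2
          exact mem_blockP_two.mpr (Or.inr ⟨w₁, hw₁1, hw₁n, rfl⟩)
        · intro g hg hKg
          have hg' : g ∈ blockP n 2 := hg
          rw [mem_blockP_two] at hg'
          rcases hg' with rfl | ⟨q, hq1, hq2, rfl⟩
          · exact absurd hKg hKN
          · rcases lt_trichotomy q w₁ with hlt | he | hgt
            · exact absurd ⟨hq1, hq2, hKg⟩ (Nat.find_min hD0 hlt)
            · rw [he]
            · exact absurd ⟨q, hgt, hq2, hKg⟩ hD0'
    · have hD' : ∃ q, q ≤ n ∧ ∃ p, 1 ≤ p ∧ p < q ∧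
          X ≤ LinearMap.ker (linForm (iv n p q)) := by
        obtain ⟨⟨p, q⟩, hpq, hqn, hK⟩ := hD
        have hp1 : 1 ≤ p := by
          rcases Nat.eq_zero_or_pos p with rfl | hp
          · exact absurd ⟨q, by omega, hqn, hK⟩ hD0
          · exact hp
        exact ⟨q, hqn, p, hp1, hpq, hK⟩
      obtain ⟨hq₁n, p₁, hp₁1, hp₁lt, hKp₁⟩ := Nat.find_spec hD'
      set q₁ := Nat.find hD' with hq₁def
      have hq₁2 : 2 ≤ q₁ := by omega
      refine ⟨⟨q₁, by omega⟩, linForm (iv n p₁ q₁), ?_, hKp₁, ?_⟩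
      · show linForm (iv n p₁ q₁) ∈ blockP n (q₁+1)
        exact (mem_blockP_big hn hq₁2 hq₁n).mpr (Or.inl ⟨p₁, hp₁1, hp₁lt, rfl⟩)
      · intro g hg hKg
        have hg' : g ∈ blockP n (q₁+1) := hg
        rw [mem_blockP_big hn hq₁2 hq₁n] at hg'
        rcases hg' with ⟨p, hp1, hp2, rfl⟩ | rfl | rfl
        · rcases lt_trichotomy p p₁ with hlt | he | hgt
          · exfalso
            have hk : X ≤ LinearMap.ker (linForm (iv n p p₁)) :=
              L3 (by omega) (by omega) hKg hKp₁
            exact Nat.find_min hD' hp₁lt ⟨by omega, p, hp1, hlt, hk⟩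
          · rw [he]
          · exfalso
            have hk : X ≤ LinearMap.ker (linForm (iv n p₁ p)) :=
              L3 (by omega) (by omega) hKp₁ hKg
            exact Nat.find_min hD' hp2 ⟨by omega, p₁, hp₁1, hgt, hk⟩
        · exact absurd ⟨q₁, by omega, hq₁n, hKg⟩ hBex
        · exact absurd ⟨q₁, hq₁2, hq₁n, hKg⟩ hCex

end Single
/-- For every `n ≥ 2` the connected subgraph arrangement of the
path-with-triangle graph `Δ_{n,1}` is factored; in fact the partition
`(π₁, …, π_{n+1})` defined in `blockP` is a nice partition of `𝒜_{Δ_{n,1}}`. -/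
theorem csa_pathTriangle_one_factored (n : ℕ) (hn : 2 ≤ n) :
    IsFactored (csaForms (pathTriangle n 1)) ∧
      IsNicePartition (csaForms (pathTriangle n 1))
        (fun b : Fin (n + 1) => blockP n (b.val + 1)) := by
  have hnice : IsNicePartition (csaForms (pathTriangle n 1))
      (fun b : Fin (n + 1) => blockP n (b.val + 1)) := by
    refine ⟨fun b => block_nonempty hn b, fun b => block_subset hn b, ?_, ?_, ?_⟩
    · intro f hf
      obtain ⟨b, hb⟩ := block_cover hn hf
      exact ⟨b, hb, fun b' hb' => block_mem_unique hn hb' hb⟩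
    · intro g hg
      exact blocks_indep hn g hg
    · intro X hX hXtop
      obtain ⟨B, hBsub, hXeq⟩ := hX
      rcases B.eq_empty_or_nonempty with rfl | ⟨f₀, hf₀⟩
      · exfalso
        apply hXtop
        rw [hXeq]
        simp
      · have hXle : X ≤ LinearMap.ker f₀ := by
          rw [hXeq]
          exact iInf₂_le f₀ hf₀
        exact block_singleton hn X ⟨f₀, hBsub hf₀, hXle⟩
  exact ⟨⟨n+1, _, hnice⟩, hnice⟩
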